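/- arXiv:1001.2562 — 4 statements merged into one kernel-verified Lean document; each statement's English description precedes it below -/
import Mathlib

section
/- Let A, A', B, B' be free abelian groups, all of the same finite rank. Let F : A → B and F' : A' → B' be group homomorphisms, and let ⟨·,·⟩_A : A × A' → ℤ and ⟨·,·⟩_B : B × B' → ℤ be perfect pairings such that ⟨F(x), F'(y)⟩_B = ⟨x, y⟩_A for all x ∈ A and y ∈ A'. Then F and F' are both isomorphisms. -/
open Module in
lemma aux_bij_of_surj {M : Type u} {N : Type v}
    [AddCommGroup M] [AddCommGroup N] [Module ℤ M] [Module ℤ N]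
    [Module.Free ℤ M] [Module.Free ℤ N] [Module.Finite ℤ M] [Module.Finite ℤ N]
    (f : M →ₗ[ℤ] N) (h : finrank ℤ M = finrank ℤ N) (hs : Function.Surjective f) :
    Function.Bijective f := by
  refine ⟨?_, hs⟩
  rw [← LinearMap.ker_eq_bot]
  have h1 := (LinearMap.lift_rank_eq_of_surjective hs).symm
  rw [← finrank_eq_rank, ← finrank_eq_rank, ← finrank_eq_rank] at h1
  simp only [Cardinal.lift_natCast, ← Nat.cast_add, Nat.cast_inj] at h1
  rw [← Submodule.finrank_eq_zero (R := ℤ)]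
  omega

open Module in
lemma aux_bij_of_left_inverse {M : Type u} {N : Type v}
    [AddCommGroup M] [AddCommGroup N] [Module ℤ M] [Module ℤ N]
    [Module.Free ℤ M] [Module.Free ℤ N] [Module.Finite ℤ M] [Module.Finite ℤ N]
    (f : M →ₗ[ℤ] N) (g : N →ₗ[ℤ] M) (h : finrank ℤ M = finrank ℤ N)
    (hgf : ∀ x, g (f x) = x) : Function.Bijective f := by
  have hg : Function.Bijective g :=
    aux_bij_of_surj g h.symm (fun x => ⟨f x, hgf x⟩)
  constructor
  · intro x y hxy
    rw [← hgf x, ← hgf y, hxy]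
  · intro b
    exact ⟨g b, hg.1 (by rw [hgf])⟩



/-- Let `A, A', B, B'` be free abelian groups, all of the same finite
rank `n`. Let `F : A → B` and `F' : A' → B'` be group homomorphisms (equivalently,
`ℤ`-linear maps), and let `pA : A × A' → ℤ` and `pB : B × B' → ℤ` be perfect pairings
(i.e. both induced maps to the `ℤ`-dual are bijective) such that
`pB (F x) (F' y) = pA x y` for all `x, y`.  Then `F` and `F'` are both isomorphisms. -/
theorem perfect_pairing_compatible_maps_bijective
    {A A' B B' : Type*}
    [AddCommGroup A] [AddCommGroup A'] [AddCommGroup B] [AddCommGroup B']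
    [Module ℤ A] [Module ℤ A'] [Module ℤ B] [Module ℤ B']
    [Module.Free ℤ A] [Module.Free ℤ A'] [Module.Free ℤ B] [Module.Free ℤ B']
    [Module.Finite ℤ A] [Module.Finite ℤ A'] [Module.Finite ℤ B] [Module.Finite ℤ B']
    (n : ℕ)
    (hA : Module.finrank ℤ A = n) (hA' : Module.finrank ℤ A' = n)
    (hB : Module.finrank ℤ B = n) (hB' : Module.finrank ℤ B' = n)
    (F : A →ₗ[ℤ] B) (F' : A' →ₗ[ℤ] B')
    (pA : A →ₗ[ℤ] A' →ₗ[ℤ] ℤ) (pB : B →ₗ[ℤ] B' →ₗ[ℤ] ℤ)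
    (hpA₁ : Function.Bijective pA) (hpA₂ : Function.Bijective pA.flip)
    (hpB₁ : Function.Bijective pB) (hpB₂ : Function.Bijective pB.flip)
    (hcompat : ∀ (x : A) (y : A'), pB (F x) (F' y) = pA x y) :
    Function.Bijective F ∧ Function.Bijective F' := by
  let eA : A ≃ₗ[ℤ] Module.Dual ℤ A' := LinearEquiv.ofBijective pA hpA₁
  let eA' : A' ≃ₗ[ℤ] Module.Dual ℤ A := LinearEquiv.ofBijective pA.flip hpA₂
  let G : B →ₗ[ℤ] A := eA.symm.toLinearMap ∘ₗ F'.dualMap ∘ₗ pB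
  let H : B' →ₗ[ℤ] A' := eA'.symm.toLinearMap ∘ₗ F.dualMap ∘ₗ pB.flip
  have hGF : ∀ x, G (F x) = x := by
    intro x
    have : F'.dualMap (pB (F x)) = eA x := by
      ext y
      simp [eA, LinearEquiv.ofBijective_apply, hcompat]
    simp only [G, LinearMap.coe_comp, LinearEquiv.coe_coe, Function.comp_apply, this,
      LinearEquiv.symm_apply_apply]
  have hHF' : ∀ y, H (F' y) = y := by
    intro y
    have : F.dualMap (pB.flip (F' y)) = eA' y := by
      ext x
      simp [eA', LinearEquiv.ofBijective_apply, hcompat]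
    simp only [H, LinearMap.coe_comp, LinearEquiv.coe_coe, Function.comp_apply, this,
      LinearEquiv.symm_apply_apply]
  exact ⟨aux_bij_of_left_inverse F G (hA.trans hB.symm) hGF,
    aux_bij_of_left_inverse F' H (hA'.trans hB'.symm) hHF'⟩
end

section
/- Assume B is an asymptotically orthonormal ℤ[v,v⁻¹]-basis of K and that β(b) = b for every b ∈ B. Then an element ξ ∈ K satisfies β(ξ) = ξ and (ξ‖ξ) ∈ 1 + v⁻¹ℤ[[v⁻¹]] if and only if ξ = b or ξ = −b for some b ∈ B; moreover, this b is uniquely determined by ξ. -/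
open LaurentPolynomial

/-- The ring `ℤ((v⁻¹))` of formal Laurent series in `v⁻¹`, realized as Hahn series
`HahnSeries ℤ ℤ` where the exponent `k` records the coefficient of `v⁻ᵏ` (so the
coefficient of `vⁿ` sits in degree `-n`, and supports are bounded above in powers
of `v`). -/
abbrev LaurentSeriesVinv : Type := HahnSeries ℤ ℤ

/-- The image of the variable `v` in `ℤ((v⁻¹))`. -/
noncomputable def vSer : LaurentSeriesVinv := HahnSeries.single (-1 : ℤ) (1 : ℤ)

/-- `f` lies in `v⁻¹ℤ[[v⁻¹]]`: the coefficient of `vⁿ` vanishes for all `n ≥ 0`. -/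
def MemVinvIntPowerSeries (f : LaurentSeriesVinv) : Prop :=
  ∀ k : ℤ, k ≤ 0 → f.coeff k = 0

/-- `f` lies in `1 + v⁻¹ℤ[[v⁻¹]]`. -/
def MemOnePlusVinv (f : LaurentSeriesVinv) : Prop :=
  f.coeff 0 = 1 ∧ ∀ k : ℤ, k < 0 → f.coeff k = 0

namespace SBAux

open Finset

lemma coeff_mul_eq_zero {f g : LaurentSeriesVinv} {a b k : ℤ}
    (hf : ∀ m, m < a → f.coeff m = 0) (hg : ∀ m, m < b → g.coeff m = 0)
    (hk : k < a + b) : (f * g).coeff k = 0 := by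
  rw [HahnSeries.coeff_mul]
  refine Finset.sum_eq_zero fun ij hij => ?_
  rw [Finset.mem_addAntidiagonal] at hij
  obtain ⟨-, -, hsum⟩ := hij
  rcases lt_or_ge ij.1 a with h | h
  · rw [hf _ h, zero_mul]
  · have h2 : ij.2 < b := by omega
    rw [hg _ h2, mul_zero]

lemma coeff_mul_eq {f g : LaurentSeriesVinv} {a b : ℤ}
    (hf : ∀ m, m < a → f.coeff m = 0) (hg : ∀ m, m < b → g.coeff m = 0) :
    (f * g).coeff (a + b) = f.coeff a * g.coeff b := by
  rw [HahnSeries.coeff_mul]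
  apply Finset.sum_eq_single (a, b)
  · rintro ⟨x, y⟩ hij hne
    rw [Finset.mem_addAntidiagonal] at hij
    obtain ⟨-, -, hsum⟩ := hij
    rcases lt_or_ge x a with h | h
    · rw [hf _ h, zero_mul]
    rcases lt_or_ge y b with h2 | h2
    · rw [hg _ h2, mul_zero]
    exact absurd (by simp only [Prod.mk.injEq]; constructor <;> omega) hne
  · intro h
    by_cases ha : f.coeff a = 0
    · rw [ha, zero_mul]
    by_cases hb : g.coeff b = 0
    · rw [hb, mul_zero]
    refine absurd ?_ h
    rw [Finset.mem_addAntidiagonal]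
    exact ⟨ha, hb, rfl⟩

lemma single_add' (a r s : ℤ) : (HahnSeries.single a (r + s) : LaurentSeriesVinv)
    = HahnSeries.single a r + HahnSeries.single a s := by
  ext k
  by_cases h : k = a <;> simp [HahnSeries.coeff_single, h]

lemma smul_single (a n : ℤ) : (HahnSeries.single n a : LaurentSeriesVinv)
    = a • HahnSeries.single n (1 : ℤ) := by
  rw [zsmul_eq_mul, ← eq_intCast (HahnSeries.C : ℤ →+* LaurentSeriesVinv) a,
    HahnSeries.C_apply, HahnSeries.single_mul_single, zero_add, mul_one]

lemma hahn_sum_coeff {α : Type*} (t : Finset α) (f : α → LaurentSeriesVinv) (k : ℤ) :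
    (∑ i ∈ t, f i).coeff k = ∑ i ∈ t, (f i).coeff k := by
  classical
  induction t using Finset.induction with
  | empty => simp
  | insert x t hx ih => simp [Finset.sum_insert hx, HahnSeries.coeff_add, ih]

/-- The embedding of `ℤ[v,v⁻¹]` into `ℤ((v⁻¹))`, sending `T n = vⁿ` to the Hahn
series supported in degree `-n`. -/
noncomputable def phi (q : LaurentPolynomial ℤ) : LaurentSeriesVinv :=
  Finsupp.sum q.coeff fun n a => HahnSeries.single (-n) a

lemma phi_single (n : ℤ) (a : ℤ) :
    phi (AddMonoidAlgebra.single n a) = HahnSeries.single (-n) a := by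
  classical
  rw [phi, AddMonoidAlgebra.coeff_single, Finsupp.sum_single_index]
  simp

lemma phi_coeff (q : LaurentPolynomial ℤ) (k : ℤ) : (phi q).coeff k = q.coeff (-k) := by
  classical
  obtain ⟨q⟩ := q
  simp only [phi, AddMonoidAlgebra.coeff_ofCoeff]
  induction q using Finsupp.induction with
  | zero => simp
  | single_add n a f hn ha ih =>
    have hadd : (Finsupp.sum (Finsupp.single n a + f) fun n a => HahnSeries.single (-n) a)
        = (HahnSeries.single (-n) a : LaurentSeriesVinv)
          + Finsupp.sum f (fun n a => (HahnSeries.single (-n) a : LaurentSeriesVinv)) := by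
      rw [Finsupp.sum_add_index (by simp) (fun n' _ r t => single_add' (-n') r t)]
      rw [Finsupp.sum_single_index (by simp)]
    rw [hadd, HahnSeries.coeff_add, ih, Finsupp.add_apply, Finsupp.single_apply,
      HahnSeries.coeff_single]
    congr 1
    by_cases h : k = -n
    · rw [if_pos h, if_pos (by omega)]
    · rw [if_neg h, if_neg (by omega)]

variable {K : Type*} [AddCommGroup K] [Module (LaurentPolynomial ℤ) K]

lemma C_smul (a : ℤ) (x : K) : (C a : LaurentPolynomial ℤ) • x = a • x := by
  rw [eq_intCast (LaurentPolynomial.C (R := ℤ)) a, Int.cast_smul_eq_zsmul]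

lemma pT (p : K →ₗ[ℤ] K →ₗ[ℤ] LaurentSeriesVinv)
    (hp₁ : ∀ x y : K, p ((T 1 : LaurentPolynomial ℤ) • x) y = vSer * p x y)
    (n : ℤ) (x y : K) :
    p ((T n : LaurentPolynomial ℤ) • x) y = HahnSeries.single (-n) 1 * p x y := by
  induction n using Int.induction_on with
  | zero => simp [one_smul, HahnSeries.single_zero_one]
  | succ n ih =>
    have h1 : (T ((n : ℤ) + 1) : LaurentPolynomial ℤ) • x
        = (T 1 : LaurentPolynomial ℤ) • (T (n : ℤ) : LaurentPolynomial ℤ) • x := by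
      rw [← mul_smul, ← T_add, show (1 + (n : ℤ)) = (n : ℤ) + 1 by ring]
    rw [h1, hp₁, ih, vSer, ← mul_assoc, HahnSeries.single_mul_single, one_mul,
      show (-1 + -(n : ℤ)) = -((n : ℤ) + 1) by ring]
  | pred n ih =>
    have h1 : (T (1 : ℤ) : LaurentPolynomial ℤ) •
        (T (-(n : ℤ) - 1) : LaurentPolynomial ℤ) • x = (T (-(n : ℤ)) : LaurentPolynomial ℤ) • x := by
      rw [← mul_smul, ← T_add, show (1 + (-(n : ℤ) - 1)) = -(n : ℤ) by ring]
    have h2 := hp₁ ((T (-(n : ℤ) - 1) : LaurentPolynomial ℤ) • x) y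
    rw [h1, ih] at h2
    have h3 := congrArg (fun z => HahnSeries.single (1 : ℤ) (1 : ℤ) * z) h2
    rw [← mul_assoc, ← mul_assoc, vSer, HahnSeries.single_mul_single,
      HahnSeries.single_mul_single] at h3
    norm_num at h3
    rw [show (-(-(n : ℤ) - 1)) = 1 + (n : ℤ) by ring]
    exact h3.symm

lemma phi_add (q r : LaurentPolynomial ℤ) : phi (q + r) = phi q + phi r := by
  rw [phi, phi, phi, AddMonoidAlgebra.coeff_add]
  exact Finsupp.sum_add_index (fun _ _ => by simp) (fun n' _ r' t' => single_add' (-n') r' t')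

lemma phi_C_mul_T (n a : ℤ) :
    phi (C a * T n : LaurentPolynomial ℤ) = HahnSeries.single (-n) a := by
  rw [← single_eq_C_mul_T]
  exact phi_single n a

lemma pSmul (p : K →ₗ[ℤ] K →ₗ[ℤ] LaurentSeriesVinv)
    (hp₁ : ∀ x y : K, p ((T 1 : LaurentPolynomial ℤ) • x) y = vSer * p x y)
    (q : LaurentPolynomial ℤ) (x y : K) :
    p (q • x) y = phi q * p x y := by
  induction q using LaurentPolynomial.induction_on' with
  | add q r hq hr =>
    rw [add_smul, map_add, LinearMap.add_apply, hq, hr, phi_add, add_mul]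
  | C_mul_T n a =>
    rw [mul_smul, C_smul, LinearMap.map_smul₂, pT p hp₁, phi_C_mul_T, smul_single a (-n),
      smul_mul_assoc]

lemma pSmul₂ (p : K →ₗ[ℤ] K →ₗ[ℤ] LaurentSeriesVinv)
    (hp₂ : ∀ x y : K, p x ((T 1 : LaurentPolynomial ℤ) • y) = vSer * p x y)
    (q : LaurentPolynomial ℤ) (x y : K) :
    p x (q • y) = phi q * p x y := by
  have h := pSmul (p.flip)
    (fun z w => by rw [LinearMap.flip_apply, LinearMap.flip_apply]; exact hp₂ w z) q y x
  rwa [LinearMap.flip_apply, LinearMap.flip_apply] at h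

lemma betaT (β : K →+ K)
    (hβv : ∀ x : K, β ((T 1 : LaurentPolynomial ℤ) • x) = (T (-1) : LaurentPolynomial ℤ) • β x)
    (n : ℤ) (x : K) :
    β ((T n : LaurentPolynomial ℤ) • x) = (T (-n) : LaurentPolynomial ℤ) • β x := by
  induction n using Int.induction_on with
  | zero => simp
  | succ n ih =>
    have h1 : (T ((n : ℤ) + 1) : LaurentPolynomial ℤ) • x
        = (T 1 : LaurentPolynomial ℤ) • (T (n : ℤ) : LaurentPolynomial ℤ) • x := by
      rw [← mul_smul, ← T_add, show (1 + (n : ℤ)) = (n : ℤ) + 1 by ring]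
    rw [h1, hβv, ih, ← mul_smul, ← T_add, show (-1 + -(n : ℤ)) = -((n : ℤ) + 1) by ring]
  | pred n ih =>
    have h1 : (T (1 : ℤ) : LaurentPolynomial ℤ) •
        (T (-(n : ℤ) - 1) : LaurentPolynomial ℤ) • x
        = (T (-(n : ℤ)) : LaurentPolynomial ℤ) • x := by
      rw [← mul_smul, ← T_add, show (1 + (-(n : ℤ) - 1)) = -(n : ℤ) by ring]
    have h2 := hβv ((T (-(n : ℤ) - 1) : LaurentPolynomial ℤ) • x)
    rw [h1, ih] at h2
    have h3 := congrArg (fun z => (T (1 : ℤ) : LaurentPolynomial ℤ) • z) h2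
    rw [← mul_smul, ← mul_smul, ← T_add, ← T_add, show ((1 : ℤ) + -1) = 0 by ring, T_zero,
      one_smul] at h3
    rw [show (-(-(n : ℤ) - 1)) = 1 + -(-(n : ℤ)) by ring]
    exact h3.symm

/-- The bar involution on `ℤ[v,v⁻¹]`, `v ↦ v⁻¹`. -/
noncomputable def barL (q : LaurentPolynomial ℤ) : LaurentPolynomial ℤ :=
  AddMonoidAlgebra.ofCoeff (Finsupp.mapDomain Neg.neg q.coeff)

lemma barL_zero : barL 0 = 0 := congrArg AddMonoidAlgebra.ofCoeff Finsupp.mapDomain_zero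

lemma barL_apply (q : LaurentPolynomial ℤ) (n : ℤ) : (barL q).coeff n = q.coeff (-n) := by
  have h : n = -(-n) := (neg_neg n).symm
  show Finsupp.mapDomain Neg.neg q.coeff n = q.coeff (-n)
  conv_lhs => rw [h]
  exact Finsupp.mapDomain_apply neg_injective q.coeff (-n)

lemma barL_add (q r : LaurentPolynomial ℤ) : barL (q + r) = barL q + barL r :=
  congrArg AddMonoidAlgebra.ofCoeff Finsupp.mapDomain_add

lemma barL_C_mul_T (n a : ℤ) :
    barL (C a * T n : LaurentPolynomial ℤ) = (C a * T (-n) : LaurentPolynomial ℤ) := by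
  rw [← single_eq_C_mul_T, ← single_eq_C_mul_T]
  exact congrArg AddMonoidAlgebra.ofCoeff Finsupp.mapDomain_single

lemma betaSmul (β : K →+ K)
    (hβv : ∀ x : K, β ((T 1 : LaurentPolynomial ℤ) • x) = (T (-1) : LaurentPolynomial ℤ) • β x)
    (q : LaurentPolynomial ℤ) (x : K) :
    β (q • x) = barL q • β x := by
  induction q using LaurentPolynomial.induction_on' with
  | add q r hq hr => rw [add_smul, map_add β, hq, hr, barL_add, add_smul]
  | C_mul_T n a =>
    rw [mul_smul, C_smul, map_zsmul β, betaT β hβv, barL_C_mul_T, mul_smul, C_smul]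

end SBAux

open SBAux in
private theorem signed_basis_uniqueness_helper
    {ι K : Type*} [AddCommGroup K] [Module (LaurentPolynomial ℤ) K]
    (b : Module.Basis ι (LaurentPolynomial ℤ) K) (s t : ι) (h : b s = b t ∨ b s = -(b t)) : s = t := by
  by_contra hst
  rcases h with h | h
  · have h' := congrArg b.repr h
    rw [b.repr_self, b.repr_self] at h'
    have h2 := DFunLike.congr_fun h' s
    rw [Finsupp.single_eq_same, Finsupp.single_eq_of_ne hst] at h2
    exact one_ne_zero h2
  · have h' := congrArg b.repr h
    rw [b.repr_self, map_neg, b.repr_self] at h'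
    have h2 := DFunLike.congr_fun h' s
    rw [Finsupp.single_eq_same, Finsupp.neg_apply, Finsupp.single_eq_of_ne hst] at h2
    norm_num at h2

/-- Let `K` be a free module over `ℤ[v,v⁻¹]` with basis
`B = {b i}` (indexed by `ι`), equipped with a `ℤ[v,v⁻¹]`-bilinear pairing
`p : K × K → ℤ((v⁻¹))` (bilinearity is expressed by `ℤ`-bilinearity together with
compatibility with multiplication by `v` in each argument) and an additive
involution `β` with `β (v • x) = v⁻¹ • β x`.  Assume the basis `B` is
asymptotically orthonormal (`(b i ‖ b j) ∈ v⁻¹ℤ[[v⁻¹]]` for `i ≠ j` and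
`(b i ‖ b i) ∈ 1 + v⁻¹ℤ[[v⁻¹]]`) and that `β` fixes every `b i`.  Then an element
`ξ ∈ K` satisfies `β ξ = ξ` and `(ξ ‖ ξ) ∈ 1 + v⁻¹ℤ[[v⁻¹]]` if and only if
`ξ = b i` or `ξ = -(b i)` for a unique index `i`. -/
theorem signed_basis_characterization
    {ι K : Type*} [AddCommGroup K] [Module (LaurentPolynomial ℤ) K]
    (b : Module.Basis ι (LaurentPolynomial ℤ) K)
    (p : K →ₗ[ℤ] K →ₗ[ℤ] LaurentSeriesVinv)
    (hp₁ : ∀ x y : K, p ((T 1 : LaurentPolynomial ℤ) • x) y = vSer * p x y)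
    (hp₂ : ∀ x y : K, p x ((T 1 : LaurentPolynomial ℤ) • y) = vSer * p x y)
    (β : K →+ K)
    (hβ₂ : ∀ x : K, β (β x) = x)
    (hβv : ∀ x : K, β ((T 1 : LaurentPolynomial ℤ) • x) = (T (-1) : LaurentPolynomial ℤ) • β x)
    (horth : ∀ i j : ι, i ≠ j → MemVinvIntPowerSeries (p (b i) (b j)))
    (hnorm : ∀ i : ι, MemOnePlusVinv (p (b i) (b i)))
    (hfix : ∀ i : ι, β (b i) = b i)
    (ξ : K) :
    (β ξ = ξ ∧ MemOnePlusVinv (p ξ ξ)) ↔ ∃! i : ι, ξ = b i ∨ ξ = -(b i) := by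
  classical
  constructor
  · rintro ⟨hβξ, hP⟩
    set c := b.repr ξ with hc
    have hξ : ξ = Finsupp.sum c fun i a => a • b i := by
      conv_lhs => rw [← b.linearCombination_repr ξ]
      rw [Finsupp.linearCombination_apply]
    -- Step 0: the coordinates are bar-invariant.
    have hbar : ∀ i k, (c i).coeff (-k) = (c i).coeff k := by
      have h1 : β ξ = Finsupp.sum c fun i a => (SBAux.barL a) • b i := by
        rw [hξ, map_finsuppSum]
        exact Finsupp.sum_congr fun i _ => by rw [SBAux.betaSmul β hβv, hfix]
      have h2 : (Finsupp.linearCombination (LaurentPolynomial ℤ) b)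
          (c.mapRange SBAux.barL SBAux.barL_zero) = β ξ := by
        rw [Finsupp.linearCombination_apply,
          Finsupp.sum_mapRange_index (fun i => zero_smul (LaurentPolynomial ℤ) (b i)), h1]
      have h3 : c.mapRange SBAux.barL SBAux.barL_zero = c := by
        have h4 := congrArg b.repr (h2.trans hβξ)
        rwa [b.repr_linearCombination] at h4
      intro i k
      have h4 := DFunLike.congr_fun h3 i
      rw [Finsupp.mapRange_apply] at h4
      have h5 : (SBAux.barL (c i)).coeff k = (c i).coeff k := by rw [h4]
      rwa [SBAux.barL_apply] at h5
    set s := c.support with hs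
    -- Expansion of the pairing.
    have hexp : p ξ ξ = ∑ i ∈ s, ∑ j ∈ s,
        SBAux.phi (c i) * (SBAux.phi (c j) * (p (b i)) (b j)) := by
      have h1 : ξ = ∑ i ∈ s, c i • b i := by rw [hξ, Finsupp.sum]
      calc (p ξ) ξ = (p (∑ i ∈ s, c i • b i)) ξ := by rw [← h1]
        _ = ∑ i ∈ s, (p (c i • b i)) ξ := by rw [map_sum, LinearMap.sum_apply]
        _ = ∑ i ∈ s, SBAux.phi (c i) * (p (b i)) ξ :=
            Finset.sum_congr rfl fun i _ => by rw [SBAux.pSmul p hp₁]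
        _ = ∑ i ∈ s, SBAux.phi (c i) * (∑ j ∈ s, SBAux.phi (c j) * (p (b i)) (b j)) := by
            refine Finset.sum_congr rfl fun i _ => ?_
            congr 1
            calc (p (b i)) ξ = (p (b i)) (∑ j ∈ s, c j • b j) := by rw [← h1]
              _ = ∑ j ∈ s, (p (b i)) (c j • b j) := map_sum _ _ _
              _ = ∑ j ∈ s, SBAux.phi (c j) * (p (b i)) (b j) :=
                  Finset.sum_congr rfl fun j _ => SBAux.pSmul₂ p hp₂ (c j) (b i) (b j)
        _ = ∑ i ∈ s, ∑ j ∈ s, SBAux.phi (c i) * (SBAux.phi (c j) * (p (b i)) (b j)) := by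
            simp_rw [Finset.mul_sum]
    -- The key coefficient computation.
    have key : ∀ N : ℤ, (∀ i ∈ s, ∀ m : ℤ, m < N → (SBAux.phi (c i)).coeff m = 0) →
        (p ξ ξ).coeff (N + N) = ∑ i ∈ s, ((SBAux.phi (c i)).coeff N) ^ 2 := by
      intro N hN
      rw [hexp, SBAux.hahn_sum_coeff]
      refine Finset.sum_congr rfl fun i hi => ?_
      rw [SBAux.hahn_sum_coeff]
      have hoff : ∀ j ∈ s, j ≠ i →
          (SBAux.phi (c i) * (SBAux.phi (c j) * (p (b i)) (b j))).coeff (N + N) = 0 := by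
        intro j hj hji
        have hPo : ∀ m : ℤ, m < (1 : ℤ) → ((p (b i)) (b j)).coeff m = 0 := fun m hm =>
          horth i j (Ne.symm hji) m (by omega)
        have hin : ∀ m : ℤ, m < N + 1 →
            (SBAux.phi (c j) * (p (b i)) (b j)).coeff m = 0 := fun m hm =>
          SBAux.coeff_mul_eq_zero (hN j hj) hPo hm
        exact SBAux.coeff_mul_eq_zero (hN i hi) hin (by omega)
      rw [Finset.sum_eq_single_of_mem i hi hoff]
      have hPd : ∀ m : ℤ, m < (0 : ℤ) → ((p (b i)) (b i)).coeff m = 0 := fun m hm =>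
        (hnorm i).2 m hm
      have hin : ∀ m : ℤ, m < N → (SBAux.phi (c i) * (p (b i)) (b i)).coeff m = 0 := by
        intro m hm
        exact SBAux.coeff_mul_eq_zero (hN i hi) hPd (by omega)
      have hinN : (SBAux.phi (c i) * (p (b i)) (b i)).coeff N = (SBAux.phi (c i)).coeff N := by
        have h := SBAux.coeff_mul_eq (hN i hi) hPd
        rw [add_zero] at h
        rw [h, (hnorm i).1, mul_one]
      calc (SBAux.phi (c i) * (SBAux.phi (c i) * (p (b i)) (b i))).coeff (N + N)
          = (SBAux.phi (c i)).coeff N * (SBAux.phi (c i) * (p (b i)) (b i)).coeff N :=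
            SBAux.coeff_mul_eq (hN i hi) hin
        _ = ((SBAux.phi (c i)).coeff N) ^ 2 := by rw [hinN, sq]
    -- The support is nonempty.
    have hc0 : c ≠ 0 := by
      intro h0
      have hξ0 : ξ = 0 := by rw [hξ, h0, Finsupp.sum_zero_index]
      have h1 := hP.1
      rw [hξ0] at h1
      simp at h1
    have hsne : s.Nonempty := by
      rw [hs]
      exact Finsupp.support_nonempty_iff.2 hc0
    have hphine : ∀ i ∈ s, SBAux.phi (c i) ≠ 0 := by
      intro i hi h0
      refine Finsupp.mem_support_iff.1 hi (AddMonoidAlgebra.coeff_injective (Finsupp.ext fun n => ?_))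
      have h1 := congrArg (fun z : LaurentSeriesVinv => z.coeff (-n)) h0
      simp only [HahnSeries.coeff_zero, SBAux.phi_coeff, neg_neg] at h1
      simpa using h1
    -- The minimal order.
    have hMmem := Finset.min'_mem (s.image fun i => (SBAux.phi (c i)).order) (hsne.image _)
    set M := (s.image fun i => (SBAux.phi (c i)).order).min' (hsne.image _) with hMdef
    obtain ⟨i₀, hi₀mem, hi₀⟩ := Finset.mem_image.1 hMmem
    have hMle : ∀ i ∈ s, M ≤ (SBAux.phi (c i)).order := fun i hi =>
      Finset.min'_le _ _ (Finset.mem_image_of_mem _ hi)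
    have hlow : ∀ i ∈ s, ∀ m : ℤ, m < M → (SBAux.phi (c i)).coeff m = 0 := fun i hi m hm =>
      HahnSeries.coeff_eq_zero_of_lt_order (lt_of_lt_of_le hm (hMle i hi))
    have hco : (SBAux.phi (c i₀)).coeff M ≠ 0 := by
      rw [← hi₀]
      exact mt HahnSeries.coeff_order_eq_zero.1 (hphine i₀ hi₀mem)
    have hsym : ∀ i k, (SBAux.phi (c i)).coeff (-k) = (SBAux.phi (c i)).coeff k := by
      intro i k
      rw [SBAux.phi_coeff, SBAux.phi_coeff, neg_neg]
      exact (hbar i k).symm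
    have hM0 : M ≤ 0 := by
      by_contra h
      push_neg at h
      have h1 : (SBAux.phi (c i₀)).coeff (-M) = 0 := hlow i₀ hi₀mem (-M) (by omega)
      rw [hsym] at h1
      exact hco h1
    rcases lt_or_eq_of_le hM0 with hMlt | hMeq
    · -- M < 0 is impossible.
      exfalso
      have h0 : (p ξ ξ).coeff (M + M) = 0 := hP.2 _ (by omega)
      rw [key M hlow] at h0
      have h1 := (Finset.sum_eq_zero_iff_of_nonneg (fun i _ => sq_nonneg _)).1 h0 i₀ hi₀mem
      exact hco (sq_eq_zero_iff.1 h1)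
    · -- M = 0 : the coordinates are constants.
      have hlow0 : ∀ i ∈ s, ∀ m : ℤ, m < 0 → (SBAux.phi (c i)).coeff m = 0 := by
        intro i hi m hm
        exact hlow i hi m (by rw [← hMeq] at hm; exact hm)
      have hconst : ∀ i ∈ s, ∀ n : ℤ, n ≠ 0 → (c i).coeff n = 0 := by
        intro i hi n hn
        have h1 : (c i).coeff n = (SBAux.phi (c i)).coeff (-n) := by rw [SBAux.phi_coeff, neg_neg]
        rcases lt_or_gt_of_ne hn with h | h
        · rw [h1, hsym]
          exact hlow0 i hi n h
        · rw [h1]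
          exact hlow0 i hi (-n) (by omega)
      set g : ι → ℤ := fun i => (c i).coeff 0 with hg
      have hg2 : ∀ i, (SBAux.phi (c i)).coeff 0 = g i := fun i => by
        rw [SBAux.phi_coeff, neg_zero]
      have hsum1 : ∑ i ∈ s, (g i) ^ 2 = 1 := by
        have h := key 0 hlow0
        rw [show (0 : ℤ) + 0 = 0 by ring] at h
        rw [← hP.1, h]
        exact Finset.sum_congr rfl fun i _ => by rw [hg2 i]
      have hex : ∃ i ∈ s, g i ≠ 0 := by
        by_contra h
        push_neg at h
        rw [Finset.sum_eq_zero (fun i hi => by rw [h i hi]; ring)] at hsum1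
        exact one_ne_zero hsum1.symm
      obtain ⟨i₁, hi₁mem, hgi₁⟩ := hex
      have hsplit : (g i₁) ^ 2 + ∑ j ∈ s.erase i₁, (g j) ^ 2 = 1 := by
        rw [Finset.add_sum_erase s (fun j => g j ^ 2) hi₁mem]
        exact hsum1
      have hge : 1 ≤ (g i₁) ^ 2 := by
        rcases lt_trichotomy (g i₁) 0 with h | h | h
        · nlinarith
        · exact absurd h hgi₁
        · nlinarith
      have hnn : 0 ≤ ∑ j ∈ s.erase i₁, (g j) ^ 2 :=
        Finset.sum_nonneg fun j _ => sq_nonneg _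
      have hrest0 : ∑ j ∈ s.erase i₁, (g j) ^ 2 = 0 := by linarith
      have hsq1 : (g i₁) ^ 2 = 1 := by linarith
      have hothers : ∀ j ∈ s, j ≠ i₁ → g j = 0 := by
        intro j hj hji
        have h1 := (Finset.sum_eq_zero_iff_of_nonneg (fun j _ => sq_nonneg _)).1 hrest0 j
          (Finset.mem_erase.2 ⟨hji, hj⟩)
        exact sq_eq_zero_iff.1 h1
      -- `c` is a signed single.
      have hcall : ∀ i, c i = AddMonoidAlgebra.single 0 (g i) := by
        intro i
        by_cases hi : i ∈ s
        · refine AddMonoidAlgebra.coeff_injective (Finsupp.ext fun n => ?_)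
          rw [AddMonoidAlgebra.coeff_single, Finsupp.single_apply]
          by_cases hn : (0 : ℤ) = n
          · rw [if_pos hn, ← hn]
          · rw [if_neg hn]
            exact hconst i hi n (fun h => hn h.symm)
        · have h0 : c i = 0 := Finsupp.notMem_support_iff.1 (by rwa [← hs])
          have h1 : g i = 0 := by rw [hg]; simp [h0]
          rw [h0, h1, AddMonoidAlgebra.single_zero]
      have hgz : ∀ i, i ≠ i₁ → g i = 0 := by
        intro i hi
        by_cases his : i ∈ s
        · exact hothers i his hi
        · have h0 : c i = 0 := Finsupp.notMem_support_iff.1 (by rwa [← hs])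
          rw [hg]
          simp [h0]
      have hξ2 : ξ = g i₁ • b i₁ := by
        have h1 : ξ = ∑ i ∈ s, c i • b i := by rw [hξ, Finsupp.sum]
        rw [h1, Finset.sum_eq_single_of_mem i₁ hi₁mem ?_]
        · rw [hcall i₁, single_eq_C_mul_T, T_zero, mul_one, SBAux.C_smul]
        · intro j hj hji
          rw [hcall j, hothers j hj hji, AddMonoidAlgebra.single_zero, zero_smul]
      have hor : ξ = b i₁ ∨ ξ = -(b i₁) := by
        rcases Int.eq_one_or_neg_one_of_mul_eq_one' (by rw [← sq]; exact hsq1) with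
          ⟨h1, -⟩ | ⟨h1, -⟩
        · left
          rw [hξ2, h1, one_smul]
        · right
          rw [hξ2, h1]
          exact neg_one_zsmul _
      refine ⟨i₁, hor, fun j hj => ?_⟩
      apply signed_basis_uniqueness_helper b
      rcases hj with hj | hj <;> rcases hor with h₀ | h₀
      · left
        rw [← hj]
        exact h₀
      · right
        rw [← hj]
        exact h₀
      · right
        have h1 : -(b j) = b i₁ := hj.symm.trans h₀
        rw [← h1, neg_neg]
      · left
        exact neg_injective (hj.symm.trans h₀)
  · rintro ⟨i, hi, -⟩
    rcases hi with h | h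
    · exact ⟨by rw [h, hfix], by rw [h]; exact hnorm i⟩
    · refine ⟨by rw [h, map_neg, hfix], ?_⟩
      have h1 : (p ξ) ξ = (p (b i)) (b i) := by
        rw [h]
        simp
      rw [h1]
      exact hnorm i
end

section
/- Let B and B' be two ℤ[v,v⁻¹]-bases of K such that: both B and B' are asymptotically orthonormal; β(b) = b for every b ∈ B and β(b') = b' for every b' ∈ B'; every coefficient of the Laurent series (b₁‖b₂) is nonnegative for all b₁, b₂ ∈ B, and likewise every coefficient of (b₁'‖b₂') is nonnegative for all b₁', b₂' ∈ B'; the graph with vertex set B having an edge between distinct b₁, b₂ whenever (b₁‖b₂) ≠ 0 is connected; and B ∩ B' is nonempty. Then B = B'. -/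
open LaurentPolynomial

section Aux

variable {K : Type*} [AddCommGroup K] [Module (LaurentPolynomial ℤ) K]

lemma smul_CT_int (a n : ℤ) (x : K) :
    (C a * T n : LaurentPolynomial ℤ) • x = a • ((T n : LaurentPolynomial ℤ) • x) := by
  rw [mul_smul, eq_intCast C a, Int.cast_smul_eq_zsmul]

variable (p : K →ₗ[ℤ] K →ₗ[ℤ] LaurentSeriesVinv)

lemma pzsmul₁ (a : ℤ) (x y : K) (k : ℤ) : (p (a • x) y).coeff k = a * (p x y).coeff k := by
  rw [map_zsmul]
  induction a using Int.induction_on with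
  | zero => simp
  | succ n ih =>
      rw [add_smul, one_smul, LinearMap.add_apply, HahnSeries.coeff_add, ih]; push_cast; ring
  | pred n ih =>
      rw [sub_smul, one_smul, LinearMap.sub_apply, HahnSeries.coeff_sub, ih]; push_cast; ring

lemma pzsmul₂ (a : ℤ) (x y : K) (k : ℤ) : (p x (a • y)).coeff k = a * (p x y).coeff k := by
  rw [map_zsmul]
  induction a using Int.induction_on with
  | zero => simp
  | succ n ih => rw [add_smul, one_smul, HahnSeries.coeff_add, ih]; push_cast; ring
  | pred n ih => rw [sub_smul, one_smul, HahnSeries.coeff_sub, ih]; push_cast; ring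

lemma pT₁ (hp₁ : ∀ x y : K, p ((T 1 : LaurentPolynomial ℤ) • x) y = vSer * p x y)
    (n : ℤ) (x y : K) :
    p ((T n : LaurentPolynomial ℤ) • x) y = HahnSeries.single (-n) 1 * p x y := by
  induction n using Int.induction_on with
  | zero => simp [one_smul]
  | succ n ih =>
      have h1 : (T ((n:ℤ) + 1) : LaurentPolynomial ℤ) • x
          = (T 1 : LaurentPolynomial ℤ) • ((T (n:ℤ) : LaurentPolynomial ℤ) • x) := by
        rw [← mul_smul, ← T_add, add_comm]
      rw [h1, hp₁, ih, ← mul_assoc]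
      congr 1
      rw [vSer, HahnSeries.single_mul_single]
      norm_num
  | pred n ih =>
      have key := hp₁ ((T (-(n:ℤ) - 1) : LaurentPolynomial ℤ) • x) y
      have h1 : (T 1 : LaurentPolynomial ℤ) • ((T (-(n:ℤ)-1) : LaurentPolynomial ℤ) • x)
          = (T (-(n:ℤ)) : LaurentPolynomial ℤ) • x := by
        rw [← mul_smul, ← T_add]; ring_nf
      rw [h1, ih] at key
      have h2 := congrArg (fun z => (HahnSeries.single (1:ℤ) (1:ℤ)) * z) key
      rw [← mul_assoc, ← mul_assoc, HahnSeries.single_mul_single, vSer,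
        HahnSeries.single_mul_single] at h2
      norm_num at h2
      rw [← h2]
      congr 1
      ring

lemma pT₂ (hp₂ : ∀ x y : K, p x ((T 1 : LaurentPolynomial ℤ) • y) = vSer * p x y)
    (n : ℤ) (x y : K) :
    p x ((T n : LaurentPolynomial ℤ) • y) = HahnSeries.single (-n) 1 * p x y := by
  induction n using Int.induction_on with
  | zero => simp [one_smul]
  | succ n ih =>
      have h1 : (T ((n:ℤ) + 1) : LaurentPolynomial ℤ) • y
          = (T 1 : LaurentPolynomial ℤ) • ((T (n:ℤ) : LaurentPolynomial ℤ) • y) := by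
        rw [← mul_smul, ← T_add, add_comm]
      rw [h1, hp₂, ih, ← mul_assoc]
      congr 1
      rw [vSer, HahnSeries.single_mul_single]
      norm_num
  | pred n ih =>
      have key := hp₂ x ((T (-(n:ℤ) - 1) : LaurentPolynomial ℤ) • y)
      have h1 : (T 1 : LaurentPolynomial ℤ) • ((T (-(n:ℤ)-1) : LaurentPolynomial ℤ) • y)
          = (T (-(n:ℤ)) : LaurentPolynomial ℤ) • y := by
        rw [← mul_smul, ← T_add]; ring_nf
      rw [h1, ih] at key
      have h2 := congrArg (fun z => (HahnSeries.single (1:ℤ) (1:ℤ)) * z) key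
      rw [← mul_assoc, ← mul_assoc, HahnSeries.single_mul_single, vSer,
        HahnSeries.single_mul_single] at h2
      norm_num at h2
      rw [← h2]
      congr 1
      ring

lemma single_mul_coeff (n : ℤ) (P : LaurentSeriesVinv) (k : ℤ) :
    (HahnSeries.single (-n) (1:ℤ) * P).coeff k = P.coeff (k + n) := by
  have := HahnSeries.coeff_single_mul_add (r := (1:ℤ)) (x := P) (a := k + n) (b := -n)
  rw [show k + n + -n = k by ring] at this
  rw [this, one_mul]

lemma pCoeff₁ (hp₁ : ∀ x y : K, p ((T 1 : LaurentPolynomial ℤ) • x) y = vSer * p x y)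
    (c : LaurentPolynomial ℤ) (x y : K) (k : ℤ) :
    (p (c • x) y).coeff k = Finsupp.sum c.coeff fun m a => a * (p x y).coeff (k + m) := by
  induction c using LaurentPolynomial.induction_on' with
  | add f g ihf ihg =>
      rw [add_smul, map_add, LinearMap.add_apply, HahnSeries.coeff_add, ihf, ihg, AddMonoidAlgebra.coeff_add,
        Finsupp.sum_add_index' (by simp) (by intro _ b₁ b₂; ring)]
  | C_mul_T n a =>
      rw [smul_CT_int, pzsmul₁, pT₁ p hp₁, single_mul_coeff, ← single_eq_C_mul_T, AddMonoidAlgebra.coeff_single,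
        Finsupp.sum_single_index (by simp)]

lemma pCoeff₂ (hp₂ : ∀ x y : K, p x ((T 1 : LaurentPolynomial ℤ) • y) = vSer * p x y)
    (c : LaurentPolynomial ℤ) (x y : K) (k : ℤ) :
    (p x (c • y)).coeff k = Finsupp.sum c.coeff fun m a => a * (p x y).coeff (k + m) := by
  induction c using LaurentPolynomial.induction_on' with
  | add f g ihf ihg =>
      rw [add_smul, map_add, HahnSeries.coeff_add, ihf, ihg, AddMonoidAlgebra.coeff_add,
        Finsupp.sum_add_index' (by simp) (by intro _ b₁ b₂; ring)]
  | C_mul_T n a =>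
      rw [smul_CT_int, pzsmul₂, pT₂ p hp₂, single_mul_coeff, ← single_eq_C_mul_T, AddMonoidAlgebra.coeff_single,
        Finsupp.sum_single_index (by simp)]

/-- The bar involution `v ↦ v⁻¹` on Laurent polynomials. -/
noncomputable def barL (c : LaurentPolynomial ℤ) : LaurentPolynomial ℤ :=
  AddMonoidAlgebra.ofCoeff (Finsupp.equivMapDomain (Equiv.neg ℤ) c.coeff)

lemma barL_apply (c : LaurentPolynomial ℤ) (m : ℤ) : (barL c).coeff m = c.coeff (-m) := by
  show (Finsupp.equivMapDomain (Equiv.neg ℤ) c.coeff) m = _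
  rw [Finsupp.equivMapDomain_apply]
  simp

lemma barL_add (c d : LaurentPolynomial ℤ) : barL (c + d) = barL c + barL d := by
  apply LaurentPolynomial.ext
  intro m
  rw [barL_apply]
  rw [show (c + d : LaurentPolynomial ℤ).coeff (-m) = c.coeff (-m) + d.coeff (-m) from rfl]
  rw [show (barL c + barL d : LaurentPolynomial ℤ).coeff m = (barL c).coeff m + (barL d).coeff m from rfl,
    barL_apply, barL_apply]

lemma barL_CT (a n : ℤ) : barL (C a * T n) = C a * T (-n) := by
  rw [← single_eq_C_mul_T, ← single_eq_C_mul_T, barL, AddMonoidAlgebra.coeff_single, Finsupp.equivMapDomain_single]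
  rfl

lemma barL_zero : barL 0 = 0 := by
  apply LaurentPolynomial.ext
  intro m
  rw [barL_apply]
  rfl

variable (β : K →+ K)

lemma βT (hβv : ∀ x : K, β ((T 1 : LaurentPolynomial ℤ) • x)
      = (T (-1) : LaurentPolynomial ℤ) • β x)
    (n : ℤ) (x : K) :
    β ((T n : LaurentPolynomial ℤ) • x) = (T (-n) : LaurentPolynomial ℤ) • β x := by
  induction n using Int.induction_on with
  | zero => simp [one_smul]
  | succ n ih =>
      have h1 : (T ((n:ℤ) + 1) : LaurentPolynomial ℤ) • x
          = (T 1 : LaurentPolynomial ℤ) • ((T (n:ℤ) : LaurentPolynomial ℤ) • x) := by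
        rw [← mul_smul, ← T_add, add_comm]
      rw [h1, hβv, ih, ← mul_smul, ← T_add]
      congr 2
      ring
  | pred n ih =>
      have key := hβv ((T (-(n:ℤ) - 1) : LaurentPolynomial ℤ) • x)
      have h1 : (T 1 : LaurentPolynomial ℤ) • ((T (-(n:ℤ)-1) : LaurentPolynomial ℤ) • x)
          = (T (-(n:ℤ)) : LaurentPolynomial ℤ) • x := by
        rw [← mul_smul, ← T_add]; ring_nf
      rw [h1, ih] at key
      have h2 := congrArg (fun z => (T 1 : LaurentPolynomial ℤ) • z) key
      rw [← mul_smul, ← mul_smul, ← T_add, ← T_add] at h2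
      norm_num at h2
      rw [← h2]
      congr 2
      ring

lemma βc (hβv : ∀ x : K, β ((T 1 : LaurentPolynomial ℤ) • x)
      = (T (-1) : LaurentPolynomial ℤ) • β x)
    (c : LaurentPolynomial ℤ) (x : K) :
    β (c • x) = (barL c) • β x := by
  induction c using LaurentPolynomial.induction_on' with
  | add f g ihf ihg => rw [add_smul, map_add, ihf, ihg, barL_add, add_smul]
  | C_mul_T n a =>
      rw [smul_CT_int, map_zsmul, βT β hβv, barL_CT, smul_CT_int]

end Aux

section Step1

variable {ι K : Type*} [AddCommGroup K] [Module (LaurentPolynomial ℤ) K]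

lemma coeff_sum {α : Type*} (t : Finset α) (f : α → LaurentSeriesVinv) (k : ℤ) :
    (∑ a ∈ t, f a).coeff k = ∑ a ∈ t, (f a).coeff k :=
  map_sum (HahnSeries.coeff.addMonoidHom k) f t

/-- Every β-fixed element with self-pairing in `1 + v⁻¹ℤ[[v⁻¹]]` is `± a basis element`. -/
lemma step1 (b : Module.Basis ι (LaurentPolynomial ℤ) K)
    (p : K →ₗ[ℤ] K →ₗ[ℤ] LaurentSeriesVinv)
    (hp₁ : ∀ x y : K, p ((T 1 : LaurentPolynomial ℤ) • x) y = vSer * p x y)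
    (hp₂ : ∀ x y : K, p x ((T 1 : LaurentPolynomial ℤ) • y) = vSer * p x y)
    (β : K →+ K)
    (hβv : ∀ x : K, β ((T 1 : LaurentPolynomial ℤ) • x) = (T (-1) : LaurentPolynomial ℤ) • β x)
    (horth : ∀ i j : ι, i ≠ j → MemVinvIntPowerSeries (p (b i) (b j)))
    (hnorm : ∀ i : ι, MemOnePlusVinv (p (b i) (b i)))
    (hfix : ∀ i : ι, β (b i) = b i)
    (x : K) (hx : β x = x) (hxx : MemOnePlusVinv (p x x)) :
    ∃ (i : ι) (ε : ℤ), (ε = 1 ∨ ε = -1) ∧ x = ε • b i := by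
  classical
  set c : ι →₀ LaurentPolynomial ℤ := b.repr x with hc
  have hxsum : x = ∑ i ∈ c.support, c i • b i := by
    conv_lhs => rw [← b.linearCombination_repr x]
    rw [Finsupp.linearCombination_apply, Finsupp.sum]
  -- bar-symmetry of coefficients
  have hbar : ∀ i, barL (c i) = c i := by
    have h1 : x = ∑ i ∈ c.support, barL (c i) • b i := by
      conv_lhs => rw [← hx, hxsum, map_sum]
      refine Finset.sum_congr rfl fun i _ => ?_
      rw [βc β hβv, hfix]
    set c' : ι →₀ LaurentPolynomial ℤ := Finsupp.mapRange barL barL_zero c with hc'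
    have h2 : Finsupp.linearCombination (LaurentPolynomial ℤ) (⇑b) c' = x := by
      rw [Finsupp.linearCombination_apply, Finsupp.sum_mapRange_index (by simp)]
      rw [h1, Finsupp.sum]
    have h3 : c' = c := by rw [← b.repr_linearCombination c', h2]
    intro i
    have := congrArg (fun f => f i) h3
    simpa [hc', Finsupp.mapRange_apply] using this
  have hsymcoef : ∀ (i : ι) (m : ℤ), (c i).coeff m = (c i).coeff (-m) := by
    intro i m
    conv_lhs => rw [← hbar i, barL_apply]
  -- the key coefficient formula
  have key : ∀ k : ℤ, k ≤ 0 → (∀ (i : ι) (m : ℤ), (c i).coeff m ≠ 0 → 2 * m ≤ -k) →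
      (p x x).coeff k
        = ∑ i ∈ c.support, ∑ m ∈ (c i).coeff.support, (c i).coeff m * (c i).coeff (-k - m) := by
    intro k hk hbd
    calc (p x x).coeff k
        = ∑ i' ∈ c.support, (p x (c i' • b i')).coeff k := by
          rw [(congrArg (p x) hxsum).trans (map_sum (p x) _ _), coeff_sum]
      _ = ∑ i' ∈ c.support, Finsupp.sum (c i').coeff
            fun n a' => a' * (p x (b i')).coeff (k + n) := by
          exact Finset.sum_congr rfl fun i' _ => pCoeff₂ p hp₂ (c i') x (b i') k
      _ = ∑ i' ∈ c.support, Finsupp.sum (c i').coeff fun n a' => a' * (c i').coeff (-k - n) := by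
          refine Finset.sum_congr rfl fun i' hi' => Finsupp.sum_congr fun n hn => ?_
          congr 1
          have h2n := hbd i' n (Finsupp.mem_support_iff.mp hn)
          have hexp : (p x (b i')).coeff (k + n)
              = ∑ i ∈ c.support, Finsupp.sum (c i).coeff
                  fun m a => a * (p (b i) (b i')).coeff (k + n + m) := by
            conv_lhs => rw [hxsum]
            rw [map_sum, LinearMap.sum_apply, coeff_sum]
            exact Finset.sum_congr rfl fun i _ => pCoeff₁ p hp₁ (c i) (b i) (b i') (k + n)
          rw [hexp]
          have hterm : ∀ i ∈ c.support,
              (Finsupp.sum (c i).coeff fun m a => a * (p (b i) (b i')).coeff (k + n + m))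
                = if i = i' then (c i').coeff (-k - n) else 0 := by
            intro i _
            by_cases hii : i = i'
            · subst hii
              rw [if_pos rfl, Finsupp.sum]
              have hone : ∀ m ∈ (c i).coeff.support,
                  (c i).coeff m * (p (b i) (b i)).coeff (k + n + m)
                    = if m = -k - n then (c i).coeff m else 0 := by
                intro m hm
                have h2m := hbd i m (Finsupp.mem_support_iff.mp hm)
                by_cases hmn : m = -k - n
                · rw [if_pos hmn, hmn, show k + n + (-k - n) = 0 by ring,
                    (hnorm i).1, mul_one]
                · rw [if_neg hmn, (hnorm i).2 _ (by omega), mul_zero]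
              rw [Finset.sum_congr rfl hone, Finset.sum_ite_eq' (c i).coeff.support (-k - n)]
              split_ifs with hmem
              · rfl
              · exact (Finsupp.notMem_support_iff.mp hmem).symm
            · rw [if_neg hii, Finsupp.sum]
              apply Finset.sum_eq_zero
              intro m hm
              have h2m := hbd i m (Finsupp.mem_support_iff.mp hm)
              rw [horth i i' hii _ (by omega), mul_zero]
          rw [Finset.sum_congr rfl hterm, Finset.sum_ite_eq' c.support i', if_pos hi']
      _ = ∑ i ∈ c.support, ∑ m ∈ (c i).coeff.support, (c i).coeff m * (c i).coeff (-k - m) := by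
          exact Finset.sum_congr rfl fun i _ => by rw [Finsupp.sum]
  -- all supports are concentrated in degree 0
  have hsupp0 : ∀ i : ι, (c i).coeff.support ⊆ {0} := by
    by_contra hcon
    push_neg at hcon
    obtain ⟨i₁, hns⟩ := hcon
    have hex : ∃ n, n ∈ (c i₁).coeff.support ∧ n ≠ 0 := by
      by_contra h
      push_neg at h
      exact hns fun n hn => Finset.mem_singleton.mpr (h n hn)
    obtain ⟨n₁, hn₁, hn₁0⟩ := hex
    have hmemA : ∀ (i : ι) (m : ℤ), (c i).coeff m ≠ 0 →
        m ∈ c.support.sup fun i => (c i).coeff.support := by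
      intro i m hm
      have hi : i ∈ c.support := by
        rw [Finsupp.mem_support_iff]
        intro h0
        exact hm (by rw [h0]; rfl)
      exact Finset.le_sup (f := fun i => (c i).coeff.support) hi (Finsupp.mem_support_iff.mpr hm)
    set A : Finset ℤ := c.support.sup fun i => (c i).coeff.support with hA
    have hAne : A.Nonempty := ⟨n₁, hmemA i₁ n₁ (Finsupp.mem_support_iff.mp hn₁)⟩
    set d := A.max' hAne with hd
    have hdmax : ∀ (i : ι) (m : ℤ), (c i).coeff m ≠ 0 → m ≤ d := fun i m hm =>
      A.le_max' m (hmemA i m hm)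
    have hdpos : 0 < d := by
      rcases lt_trichotomy n₁ 0 with h | h | h
      · have : -n₁ ≤ d := hdmax i₁ (-n₁) (by
          rw [← hsymcoef]
          exact Finsupp.mem_support_iff.mp hn₁)
        omega
      · exact absurd h hn₁0
      · exact lt_of_lt_of_le h (hdmax i₁ n₁ (Finsupp.mem_support_iff.mp hn₁))
    have h0 : (p x x).coeff (-(2*d)) = 0 := hxx.2 _ (by omega)
    rw [key (-(2*d)) (by omega) (fun i m hm => by have := hdmax i m hm; omega)] at h0
    have hsq : ∀ i ∈ c.support,
        (∑ m ∈ (c i).coeff.support, (c i).coeff m * (c i).coeff (-(-(2*d)) - m))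
          = (if d ∈ (c i).coeff.support then (c i).coeff d * (c i).coeff d else 0) := by
      intro i _
      have hone : ∀ m ∈ (c i).coeff.support,
          (c i).coeff m * (c i).coeff (-(-(2*d)) - m) = if m = d then (c i).coeff m * (c i).coeff m else 0 := by
        intro m hm
        have hme := Finsupp.mem_support_iff.mp hm
        have hmd := hdmax i m hme
        by_cases h : m = d
        · rw [if_pos h, h, show -(-(2*d)) - d = d by ring]
        · rw [if_neg h]
          have hz : (c i).coeff (-(-(2*d)) - m) = 0 := by
            by_contra hne
            have := hdmax i _ hne
            omega
          rw [hz, mul_zero]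
      rw [Finset.sum_congr rfl hone, Finset.sum_ite_eq' (c i).coeff.support d]
    rw [Finset.sum_congr rfl hsq] at h0
    have hall := (Finset.sum_eq_zero_iff_of_nonneg (fun i _ => by
      split_ifs
      · exact mul_self_nonneg _
      · exact le_refl 0)).mp h0
    have hdA : d ∈ A := A.max'_mem hAne
    rw [hA, Finset.mem_sup] at hdA
    obtain ⟨i₂, hi₂, hdi₂⟩ := hdA
    have := hall i₂ hi₂
    rw [if_pos hdi₂] at this
    exact Finsupp.mem_support_iff.mp hdi₂ (mul_self_eq_zero.mp this)
  -- constant-coefficient analysis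
  have h1 : (p x x).coeff 0 = 1 := hxx.1
  rw [key 0 le_rfl (fun i m hm => by
    have := Finset.mem_singleton.mp (hsupp0 i (Finsupp.mem_support_iff.mpr hm))
    omega)] at h1
  have hsq0 : ∀ i ∈ c.support,
      (∑ m ∈ (c i).coeff.support, (c i).coeff m * (c i).coeff (-0 - m)) = (c i).coeff 0 * (c i).coeff 0 := by
    intro i hi
    have hi' := Finsupp.mem_support_iff.mp hi
    have hsupp : (c i).coeff.support = {0} := by
      rcases Finset.subset_singleton_iff.mp (hsupp0 i) with h | h
      · exact (hi' (AddMonoidAlgebra.ext (Finsupp.support_eq_empty.mp h))).elim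
      · exact h
    rw [hsupp, Finset.sum_singleton, show (-0 - 0 : ℤ) = 0 by norm_num]
  rw [Finset.sum_congr rfl hsq0] at h1
  obtain ⟨i₀, hi₀, hne₀⟩ : ∃ i₀ ∈ c.support, (c i₀).coeff 0 * (c i₀).coeff 0 ≠ 0 := by
    by_contra h
    push_neg at h
    rw [Finset.sum_eq_zero h] at h1
    exact one_ne_zero h1.symm
  have hsplit : (c i₀).coeff 0 * (c i₀).coeff 0 + ∑ i ∈ c.support.erase i₀, (c i).coeff 0 * (c i).coeff 0 = 1 := by
    exact (Finset.add_sum_erase _ (fun i => (c i).coeff 0 * (c i).coeff 0) hi₀).trans h1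
  have hrest_nonneg : 0 ≤ ∑ i ∈ c.support.erase i₀, (c i).coeff 0 * (c i).coeff 0 :=
    Finset.sum_nonneg fun i _ => mul_self_nonneg _
  have h1le : 1 ≤ (c i₀).coeff 0 * (c i₀).coeff 0 := by
    have := lt_of_le_of_ne (mul_self_nonneg ((c i₀).coeff 0)) (Ne.symm hne₀)
    omega
  have hsq1 : (c i₀).coeff 0 * (c i₀).coeff 0 = 1 := by omega
  have hrest0 : ∀ i ∈ c.support.erase i₀, (c i).coeff 0 * (c i).coeff 0 = 0 :=
    (Finset.sum_eq_zero_iff_of_nonneg fun i _ => mul_self_nonneg _).mp (by omega)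
  have hczero : ∀ i, i ≠ i₀ → c i = 0 := by
    intro i hii
    by_cases hi : i ∈ c.support
    · have h00 : (c i).coeff 0 = 0 :=
        mul_self_eq_zero.mp (hrest0 i (Finset.mem_erase.mpr ⟨hii, hi⟩))
      apply LaurentPolynomial.ext
      intro m
      show (c i).coeff m = 0
      by_cases hm0 : m = 0
      · rw [hm0]; exact h00
      · by_contra hne
        exact hm0 (Finset.mem_singleton.mp (hsupp0 i (Finsupp.mem_support_iff.mpr hne)))
    · exact Finsupp.notMem_support_iff.mp hi
  have hc_single : c = Finsupp.single i₀ (c i₀) := by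
    ext i
    by_cases hii : i = i₀
    · subst hii; rw [Finsupp.single_eq_same]
    · rw [Finsupp.single_eq_of_ne' (Ne.symm hii)]
      rw [hczero i hii]
  have hci₀ : c i₀ = C ((c i₀).coeff 0) * T 0 := by
    rw [← single_eq_C_mul_T]
    apply LaurentPolynomial.ext
    intro m
    by_cases hm0 : m = 0
    · subst hm0
      rw [show (AddMonoidAlgebra.single (0:ℤ) ((c i₀).coeff 0) : LaurentPolynomial ℤ).coeff 0 = (c i₀).coeff 0
        from Finsupp.single_eq_same]
    · rw [show (AddMonoidAlgebra.single (0:ℤ) ((c i₀).coeff 0) : LaurentPolynomial ℤ).coeff m = 0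
        from Finsupp.single_eq_of_ne' fun h => hm0 h.symm]
      by_contra hne
      exact hm0 (Finset.mem_singleton.mp (hsupp0 i₀ (Finsupp.mem_support_iff.mpr hne)))
  refine ⟨i₀, (c i₀).coeff 0, Int.isUnit_iff.mp (IsUnit.of_mul_eq_one _ hsq1), ?_⟩
  have hxc : x = c i₀ • b i₀ := by
    have hx2 : Finsupp.linearCombination (LaurentPolynomial ℤ) ⇑b c = x :=
      b.linearCombination_repr x
    rw [← hx2, hc_single, Finsupp.linearCombination_single, Finsupp.single_eq_same]
  rw [hxc]
  conv_lhs => rw [hci₀, smul_CT_int, T_zero, one_smul]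

end Step1

lemma one_ne_neg_one_LP : (1 : LaurentPolynomial ℤ) ≠ -1 := by
  intro h
  have h0 := congrArg (fun q : LaurentPolynomial ℤ => q.coeff 0) h
  rw [show ((-1 : LaurentPolynomial ℤ)).coeff 0 = -((1 : LaurentPolynomial ℤ).coeff 0) from rfl,
    ← T_zero, T_apply] at h0
  norm_num at h0

lemma one_ne_zero_LP : (1 : LaurentPolynomial ℤ) ≠ 0 := by
  intro h
  have h0 := congrArg (fun q : LaurentPolynomial ℤ => q.coeff 0) h
  rw [show ((0 : LaurentPolynomial ℤ)).coeff 0 = 0 from rfl, ← T_zero, T_apply] at h0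
  norm_num at h0

/-- Let `K` be a free `ℤ[v,v⁻¹]`-module with a `ℤ[v,v⁻¹]`-bilinear
pairing `p : K × K → ℤ((v⁻¹))` and an additive involution `β` with
`β (v • x) = v⁻¹ • β x`.  Let `B = {b i}` and `B' = {b' i'}` be two bases of `K`
such that: both are asymptotically orthonormal; `β` fixes every element of `B`
and of `B'`; all coefficients of the Laurent series `(b i ‖ b j)` and
`(b' i' ‖ b' j')` are nonnegative; the graph on `B` with an edge between distinct
`b i`, `b j` whenever the pairing `(b i ‖ b j)` (in either order) is nonzero is
connected; and `B ∩ B' ≠ ∅`.  Then `B = B'`. -/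
theorem basis_uniqueness_from_positivity
    {ι ι' K : Type*} [AddCommGroup K] [Module (LaurentPolynomial ℤ) K]
    (b : Module.Basis ι (LaurentPolynomial ℤ) K) (b' : Module.Basis ι' (LaurentPolynomial ℤ) K)
    (p : K →ₗ[ℤ] K →ₗ[ℤ] LaurentSeriesVinv)
    (hp₁ : ∀ x y : K, p ((T 1 : LaurentPolynomial ℤ) • x) y = vSer * p x y)
    (hp₂ : ∀ x y : K, p x ((T 1 : LaurentPolynomial ℤ) • y) = vSer * p x y)
    (β : K →+ K)
    (hβ₂ : ∀ x : K, β (β x) = x)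
    (hβv : ∀ x : K, β ((T 1 : LaurentPolynomial ℤ) • x) = (T (-1) : LaurentPolynomial ℤ) • β x)
    -- both bases are asymptotically orthonormal
    (horth : ∀ i j : ι, i ≠ j → MemVinvIntPowerSeries (p (b i) (b j)))
    (hnorm : ∀ i : ι, MemOnePlusVinv (p (b i) (b i)))
    (horth' : ∀ i j : ι', i ≠ j → MemVinvIntPowerSeries (p (b' i) (b' j)))
    (hnorm' : ∀ i : ι', MemOnePlusVinv (p (b' i) (b' i)))
    -- β fixes each element of both bases
    (hfix : ∀ i : ι, β (b i) = b i)
    (hfix' : ∀ i : ι', β (b' i) = b' i)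
    -- nonnegativity of all coefficients of the pairings within each basis
    (hpos : ∀ i j : ι, ∀ k : ℤ, 0 ≤ (p (b i) (b j)).coeff k)
    (hpos' : ∀ i j : ι', ∀ k : ℤ, 0 ≤ (p (b' i) (b' j)).coeff k)
    -- connectedness of the pairing graph on B
    (hconn : (SimpleGraph.fromRel fun i j : ι => p (b i) (b j) ≠ 0).Connected)
    -- the bases share a common element
    (hmeet : (Set.range ⇑b ∩ Set.range ⇑b').Nonempty) :
    Set.range ⇑b = Set.range ⇑b' := by
  classical
  have f1 : ∀ i : ι, ∃ (j : ι') (ε : ℤ), (ε = 1 ∨ ε = -1) ∧ b i = ε • b' j :=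
    fun i => step1 b' p hp₁ hp₂ β hβv horth' hnorm' hfix' (b i) (hfix i) (hnorm i)
  have f2 : ∀ j : ι', ∃ (i : ι) (ε : ℤ), (ε = 1 ∨ ε = -1) ∧ b' j = ε • b i :=
    fun j => step1 b p hp₁ hp₂ β hβv horth hnorm hfix (b' j) (hfix' j) (hnorm' j)
  choose σ ε hε hbε using f1
  -- a basis element is never `-1` times a basis element
  have hnoneg : ∀ (j₁ j₂ : ι'), b' j₁ = (-1 : ℤ) • b' j₂ → False := by
    intro j₁ j₂ h
    have h' : b'.repr (b' j₁) j₁ = b'.repr ((-1 : ℤ) • b' j₂) j₁ := by rw [← h]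
    rw [Module.Basis.repr_self, map_zsmul, Module.Basis.repr_self, Finsupp.smul_apply,
      Finsupp.single_eq_same, neg_one_zsmul] at h'
    by_cases hj : j₂ = j₁
    · rw [hj, Finsupp.single_eq_same] at h'
      exact one_ne_neg_one_LP h'
    · rw [Finsupp.single_eq_of_ne' hj] at h'
      rw [neg_zero] at h'
      exact one_ne_zero_LP h'
  -- signs agree along edges of the pairing graph
  have hedge : ∀ i₁ i₂ : ι,
      (SimpleGraph.fromRel fun i j : ι => p (b i) (b j) ≠ 0).Adj i₁ i₂ → ε i₁ = ε i₂ := by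
    intro i₁ i₂ hadj
    rw [SimpleGraph.fromRel_adj] at hadj
    obtain ⟨hne, hor⟩ := hadj
    have main : ∀ u w : ι, p (b u) (b w) ≠ 0 → ε u = ε w := by
      intro u w hpne
      by_contra hne2
      have hεprod : ε u * ε w = -1 := by
        rcases hε u with h | h <;> rcases hε w with h' | h' <;> rw [h, h'] at hne2 ⊢ <;> omega
      have hcalc : ∀ k : ℤ, (p (b u) (b w)).coeff k
          = (ε u * ε w) * (p (b' (σ u)) (b' (σ w))).coeff k := by
        intro k
        conv_lhs => rw [hbε u, hbε w]
        rw [pzsmul₁, pzsmul₂]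
        ring
      apply hpne
      apply HahnSeries.ext
      funext k
      have h1 := hpos u w k
      have h2 := hpos' (σ u) (σ w) k
      have h3 := hcalc k
      rw [hεprod] at h3
      rw [show ((0 : LaurentSeriesVinv)).coeff k = 0 from rfl]
      omega
    rcases hor with h | h
    · exact main i₁ i₂ h
    · exact (main i₂ i₁ h).symm
  have hconst : ∀ i₁ i₂ : ι, ε i₁ = ε i₂ := by
    intro i₁ i₂
    obtain ⟨w⟩ := hconn.preconnected i₁ i₂
    induction w with
    | nil => rfl
    | cons h q ih => exact (hedge _ _ h).trans ih
  obtain ⟨x₀, ⟨i₀, hbi₀⟩, ⟨j₀, hbj₀⟩⟩ := hmeet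
  have hεi₀ : ε i₀ = 1 := by
    rcases hε i₀ with h | h
    · exact h
    · exfalso
      apply hnoneg j₀ (σ i₀)
      rw [hbj₀, ← hbi₀, hbε i₀, h]
  have hall1 : ∀ i, ε i = 1 := fun i => (hconst i i₀).trans hεi₀
  have hbb' : ∀ i, b i = b' (σ i) := fun i => by rw [hbε i, hall1 i, one_smul]
  apply Set.eq_of_subset_of_subset
  · rintro z ⟨i, rfl⟩
    exact ⟨σ i, (hbb' i).symm⟩
  · rintro z ⟨j, rfl⟩
    obtain ⟨i, ε', hε', hj⟩ := f2 j
    rcases hε' with h | h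
    · rw [h, one_smul] at hj
      exact ⟨i, hj.symm⟩
    · exfalso
      rw [h, hbb' i] at hj
      exact hnoneg _ _ hj
end

section
/- Let Λ be a finitely generated free abelian group, let ℤ[Λ] be its integral group ring, and let ε : ℤ[Λ] → ℤ be the augmentation homomorphism (the ring homomorphism sending every group element of Λ to 1). Let M be a finitely generated free ℤ[Λ]-module and let σ : M → M be a ℤ[Λ]-linear map with σ ∘ σ = id_M, such that the induced ℤ-linear endomorphism of the base change M ⊗_{ℤ[Λ]} ℤ (taken along ε) is the identity. Then σ = id_M. -/
/-- Let `Λ` be a finitely generated free abelian group and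
`ℤ[Λ] = AddMonoidAlgebra ℤ Λ` its integral group ring, with augmentation
`ε : ℤ[Λ] → ℤ` (the ring homomorphism sending every group element `single g 1` to `1`).
Let `M` be a finitely generated free `ℤ[Λ]`-module and `σ : M → M` a `ℤ[Λ]`-linear
involution which induces the identity on the base change `M ⊗_{ℤ[Λ]} ℤ` along `ε`
(equivalently, `σ m - m` lies in `(ker ε) • M` for every `m`).  Then `σ = id`. -/
theorem involution_trivial_on_augmentation_is_identity
    {Λ : Type*} [AddCommGroup Λ] [Module.Free ℤ Λ] [Module.Finite ℤ Λ]
    (ε : AddMonoidAlgebra ℤ Λ →+* ℤ)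
    (hε : ∀ g : Λ, ε (AddMonoidAlgebra.single g (1 : ℤ)) = 1)
    {M : Type*} [AddCommGroup M] [Module (AddMonoidAlgebra ℤ Λ) M]
    [Module.Free (AddMonoidAlgebra ℤ Λ) M] [Module.Finite (AddMonoidAlgebra ℤ Λ) M]
    (σ : M →ₗ[AddMonoidAlgebra ℤ Λ] M)
    (hσ₂ : σ ∘ₗ σ = LinearMap.id)
    (hσε : ∀ m : M, σ m - m ∈ (RingHom.ker ε) • (⊤ : Submodule (AddMonoidAlgebra ℤ Λ) M)) :
    σ = LinearMap.id := by
  classical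
  -- Notation
  let R := AddMonoidAlgebra ℤ Λ
  -- `Λ` is a finitely generated additive monoid
  haveI hFG : AddGroup.FG Λ := Module.Finite.iff_addGroup_fg.mp ‹_›
  haveI hFGm : AddMonoid.FG Λ := AddGroup.fg_iff_addMonoid_fg.mp hFG
  -- `R` is Noetherian
  haveI hNoeth : IsNoetherianRing R := Algebra.FiniteType.isNoetherianRing ℤ R
  -- `R` is a domain
  haveI hUS : UniqueSums Λ := by
    let b := Module.Free.chooseBasis ℤ Λ
    exact UniqueSums.of_injective_addHom b.repr.toLinearMap.toAddMonoidHom.toAddHom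
      b.repr.injective inferInstance
  haveI hDom : IsDomain R := NoZeroDivisors.to_isDomain R
  set I := RingHom.ker ε with hI
  -- the involution minus the identity
  set τ : M →ₗ[R] M := σ - LinearMap.id with hτdef
  have hσσ : ∀ m : M, σ (σ m) = m := fun m => DFunLike.congr_fun hσ₂ m
  have hτ : ∀ m : M, τ m ∈ I • (⊤ : Submodule R M) := fun m => hσε m
  have hττ : ∀ m : M, τ (τ m) = (-2 : R) • τ m := by
    intro m
    have h2 : (-2 : R) • (σ m - m) = -((σ m - m) + (σ m - m)) := by
      rw [neg_smul, two_smul]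
    simp only [hτdef, LinearMap.sub_apply, LinearMap.id_apply, map_sub, hσσ, h2]
    abel
  -- τ raises the augmentation filtration
  have hstep : ∀ (n : ℕ) (x : M), x ∈ (I ^ n) • (⊤ : Submodule R M) →
      τ x ∈ (I ^ (n + 1)) • (⊤ : Submodule R M) := by
    intro n x hx
    have hmem : τ x ∈ Submodule.map τ ((I ^ n) • (⊤ : Submodule R M)) := ⟨x, hx, rfl⟩
    rw [Submodule.map_smul''] at hmem
    have h2 : Submodule.map τ (⊤ : Submodule R M) ≤ I • ⊤ := by
      rintro y ⟨z, -, rfl⟩; exact hτ z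
    have h3 : (I ^ n) • Submodule.map τ (⊤ : Submodule R M) ≤ (I ^ n) • (I • ⊤) :=
      smul_mono_right _ h2
    have h4 : (I ^ (n + 1)) • (⊤ : Submodule R M) = (I ^ n) • (I • ⊤) := by
      rw [pow_succ, ← smul_eq_mul, Submodule.smul_assoc]
    rw [h4]
    exact h3 hmem
  have key : ∀ (n : ℕ) (m : M),
      ((-2 : R) ^ n) • τ m ∈ (I ^ (n + 1)) • (⊤ : Submodule R M) := by
    intro n
    induction n with
    | zero => intro m; simpa using hτ m
    | succ n ih =>
      intro m
      have := hstep (n + 1) _ (ih m)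
      rwa [map_smul, hττ, smul_smul, ← pow_succ] at this
  -- pass to coordinates with respect to a basis of `M`
  let b := Module.Free.chooseBasis R M
  have hcoord : ∀ (m : M) (i : Module.Free.ChooseBasisIndex R M) (n : ℕ),
      (-2 : R) ^ n * (b.repr (τ m) i) ∈ I ^ (n + 1) := by
    intro m i n
    have hmap : ∀ x ∈ (I ^ (n + 1)) • (⊤ : Submodule R M), b.coord i x ∈ I ^ (n + 1) := by
      intro x hx
      refine Submodule.smul_induction_on hx ?_ ?_
      · intro a ha y _
        rw [map_smul, smul_eq_mul]
        exact Ideal.mul_mem_right _ _ ha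
      · intro y z hy hz
        rw [map_add]; exact Ideal.add_mem _ hy hz
    have := hmap _ (key n m)
    rwa [map_smul, smul_eq_mul, Module.Basis.coord_apply] at this
  -- localize away from 2
  have h2ε : ε 2 = 2 := by
    rw [show (2 : AddMonoidAlgebra ℤ Λ) = 1 + 1 by norm_num, map_add, map_one]
    norm_num
  have h2ne : (2 : R) ≠ 0 := by
    intro h
    have := congrArg ε h
    rw [h2ε, map_zero] at this
    norm_num at this
  have hle : Submonoid.powers (2 : R) ≤ nonZeroDivisors R :=
    powers_le_nonZeroDivisors_of_noZeroDivisors h2ne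
  let S := Localization.Away (2 : R)
  haveI : IsDomain S := IsLocalization.isDomain_localization hle
  haveI : IsNoetherianRing S :=
    IsLocalization.isNoetherianRing (Submonoid.powers (2 : R)) S hNoeth
  let f : R →+* S := algebraMap R S
  set J := I.map f with hJdef
  -- the extended augmentation ideal is proper
  have hunit : ∀ y : Submonoid.powers (2 : R), IsUnit (((algebraMap ℤ ℚ).comp ε) y) := by
    rintro ⟨y, n, rfl⟩
    simp only [RingHom.comp_apply, map_pow, h2ε]
    exact (isUnit_iff_ne_zero.mpr (by norm_num)).pow n
  have hJ : J ≠ ⊤ := by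
    set ψ : S →+* ℚ := IsLocalization.lift hunit with hψ
    have hker : J ≤ RingHom.ker ψ := by
      rw [hJdef, Ideal.map_le_iff_le_comap]
      intro a ha
      have heq : ψ (f a) = ((algebraMap ℤ ℚ).comp ε) a := IsLocalization.lift_eq hunit a
      have ha0 : ε a = 0 := ha
      rw [Ideal.mem_comap, RingHom.mem_ker, heq, RingHom.comp_apply, ha0, map_zero]
    intro htop
    have h1 : (1 : S) ∈ J := htop ▸ Submodule.mem_top
    have := hker h1
    rw [RingHom.mem_ker, map_one] at this
    norm_num at this
  have hKrull : ⨅ i : ℕ, J ^ i = ⊥ := Ideal.iInf_pow_eq_bot_of_isDomain J hJ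
  -- each coordinate of `τ m` vanishes
  have hτ0 : ∀ m : M, τ m = 0 := by
    intro m
    have hrepr : b.repr (τ m) = 0 := by
      refine Finsupp.ext fun i => ?_
      rw [Finsupp.zero_apply]
      set c := b.repr (τ m) i with hc
      have hfc : ∀ n : ℕ, f c ∈ J ^ n := by
        intro n
        have h1 : f ((-2 : R) ^ n * c) ∈ J ^ (n + 1) := by
          rw [hJdef, ← Ideal.map_pow]
          exact Ideal.mem_map_of_mem f (hcoord m i n)
        have hu : IsUnit (f ((-2 : R) ^ n)) := by
          rw [map_pow, map_neg]
          exact ((IsLocalization.map_units S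
            ⟨2, Submonoid.mem_powers _⟩).neg).pow n
        rw [map_mul] at h1
        have h2 : f c ∈ J ^ (n + 1) := (Ideal.unit_mul_mem_iff_mem _ hu).mp h1
        exact Ideal.pow_le_pow_right (Nat.le_succ n) h2
      have hbot : f c ∈ (⊥ : Ideal S) := by
        rw [← hKrull]
        exact Ideal.mem_iInf.mpr hfc
      have hfc0 : f c = 0 := Ideal.mem_bot.mp hbot
      have hc0 : c = 0 := by
        have : f c = f 0 := by rw [hfc0, map_zero]
        exact IsLocalization.injective S hle this
      show b.repr (τ m) i = 0
      rw [← hc, hc0]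
    exact b.repr.map_eq_zero_iff.mp hrepr
  ext m
  have := hτ0 m
  rw [hτdef, LinearMap.sub_apply, LinearMap.id_apply, sub_eq_zero] at this
  simpa using this
end
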